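/- arXiv:1502.03968 — 3 statements merged into one kernel-verified Lean document; each statement's English description precedes it below -/
import Mathlib

section
/- Let 1 < p < N be real numbers and let 0 ≤ μ < ((N-p)/p)^p. Define g(γ) = (p-1)γ^p - (N-p)γ^{p-1} + μ for γ ≥ 0. Then g has exactly two nonnegative roots γ₁ < γ₂, and they satisfy 0 ≤ γ₁ < (N-p)/p < γ₂ ≤ (N-p)/(p-1). -/
open Set Real

/-- For 1 < p < N and 0 ≤ μ < ((N-p)/p)^p, the function
g(γ) = (p-1)γ^p - (N-p)γ^{p-1} + μ has exactly two nonnegative roots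
γ₁ < γ₂, with 0 ≤ γ₁ < (N-p)/p < γ₂ ≤ (N-p)/(p-1). -/
theorem stmt0 (N p μ : ℝ) (hp : 1 < p) (hpN : p < N) (hμ0 : 0 ≤ μ)
    (hμ : μ < ((N - p) / p) ^ p) :
    ∃ γ₁ γ₂ : ℝ, 0 ≤ γ₁ ∧ γ₁ < γ₂ ∧
      (p - 1) * γ₁ ^ p - (N - p) * γ₁ ^ (p - 1) + μ = 0 ∧
      (p - 1) * γ₂ ^ p - (N - p) * γ₂ ^ (p - 1) + μ = 0 ∧
      (∀ γ : ℝ, 0 ≤ γ → (p - 1) * γ ^ p - (N - p) * γ ^ (p - 1) + μ = 0 →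
        γ = γ₁ ∨ γ = γ₂) ∧
      γ₁ < (N - p) / p ∧ (N - p) / p < γ₂ ∧ γ₂ ≤ (N - p) / (p - 1) := by
  have hp0 : (0:ℝ) < p := lt_trans one_pos hp
  have hp1 : (0:ℝ) < p - 1 := sub_pos.mpr hp
  have hs : (0:ℝ) < N - p := sub_pos.mpr hpN
  set m : ℝ := (N - p) / p with hmdef
  set M : ℝ := (N - p) / (p - 1) with hMdef
  have hm0 : 0 < m := div_pos hs hp0
  have hmM : m < M := by
    rw [hmdef, hMdef]
    exact div_lt_div_of_pos_left hs hp1 (by linarith)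
  set g : ℝ → ℝ := fun γ => (p - 1) * γ ^ p - (N - p) * γ ^ (p - 1) + μ with hgdef
  -- values
  have hg0 : g 0 = μ := by
    simp [hgdef, Real.zero_rpow hp0.ne', Real.zero_rpow hp1.ne']
  have hgm : g m = μ - m ^ p := by
    have h1 : m ^ p = m ^ (p - 1) * m := by
      rw [← Real.rpow_add_one hm0.ne' (p - 1)]; ring_nf
    have h2 : N - p = p * m := by rw [hmdef]; field_simp
    rw [hgdef]; simp only
    rw [h1, h2]; ring
  have hgm0 : g m < 0 := by rw [hgm]; linarith
  have hgM : g M = μ := by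
    have hM0 : 0 < M := div_pos hs hp1
    have h1 : M ^ p = M ^ (p - 1) * M := by
      rw [← Real.rpow_add_one hM0.ne' (p - 1)]; ring_nf
    have h2 : N - p = (p - 1) * M := by rw [hMdef]; field_simp
    rw [hgdef]; simp only
    rw [h1, h2]; ring
  -- derivative
  have hderiv : ∀ x : ℝ, 0 < x →
      HasDerivAt g ((p - 1) * x ^ (p - 2) * (p * x - (N - p))) x := by
    intro x hx
    have h1 : HasDerivAt (fun y : ℝ => y ^ p) (p * x ^ (p - 1)) x :=
      Real.hasDerivAt_rpow_const (Or.inl hx.ne')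
    have h2 : HasDerivAt (fun y : ℝ => y ^ (p - 1)) ((p - 1) * x ^ (p - 1 - 1)) x :=
      Real.hasDerivAt_rpow_const (Or.inl hx.ne')
    have := ((h1.const_mul (p - 1)).sub (h2.const_mul (N - p))).add_const μ
    refine this.congr_deriv ?_
    have h3 : x ^ (p - 1) = x ^ (p - 2) * x := by
      rw [← Real.rpow_add_one hx.ne' (p - 2)]; ring_nf
    rw [h3]
    have h4 : p - 1 - 1 = p - 2 := by ring
    rw [h4]; ring
  have hcont : ContinuousOn g (Ici 0) := by
    intro x hx
    rcases eq_or_lt_of_le (mem_Ici.mp hx) with h | h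
    · apply ContinuousAt.continuousWithinAt
      have c1 : ContinuousAt (fun y : ℝ => y ^ p) x :=
        Real.continuousAt_rpow_const x p (Or.inr hp0.le)
      have c2 : ContinuousAt (fun y : ℝ => y ^ (p - 1)) x :=
        Real.continuousAt_rpow_const x (p - 1) (Or.inr hp1.le)
      exact ((c1.const_mul _).sub (c2.const_mul _)).add continuousAt_const
    · exact ((hderiv x h).continuousAt).continuousWithinAt
  -- strict monotonicity
  have hanti : StrictAntiOn g (Icc 0 m) := by
    apply strictAntiOn_of_deriv_neg (convex_Icc 0 m)
      (hcont.mono (Icc_subset_Ici_self))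
    intro x hx
    rw [interior_Icc] at hx
    rw [(hderiv x hx.1).deriv]
    have : p * x - (N - p) < 0 := by
      have := hx.2
      rw [hmdef, lt_div_iff₀ hp0] at this
      linarith
    exact mul_neg_of_pos_of_neg
      (mul_pos hp1 (Real.rpow_pos_of_pos hx.1 _)) this
  have hmono : StrictMonoOn g (Ici m) := by
    apply strictMonoOn_of_deriv_pos (convex_Ici m)
      (hcont.mono (Ici_subset_Ici.mpr hm0.le))
    intro x hx
    rw [interior_Ici] at hx
    have hx0 : 0 < x := lt_trans hm0 hx
    rw [(hderiv x hx0).deriv]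
    have : 0 < p * x - (N - p) := by
      have hxm : m < x := hx
      rw [hmdef, div_lt_iff₀ hp0] at hxm
      linarith
    exact mul_pos (mul_pos hp1 (Real.rpow_pos_of_pos hx0 _)) this
  -- existence of γ₁
  have hIVT1 : (0:ℝ) ∈ g '' Icc 0 m := by
    apply intermediate_value_Icc' hm0.le (hcont.mono (Icc_subset_Ici_self))
    constructor
    · exact hgm0.le
    · rw [hg0]; exact hμ0
  obtain ⟨γ₁, hγ₁mem, hγ₁⟩ := hIVT1
  have hγ₁m : γ₁ < m := by
    rcases lt_or_eq_of_le hγ₁mem.2 with h | h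
    · exact h
    · exfalso; rw [h] at hγ₁; linarith [hgm0, hγ₁]
  -- existence of γ₂
  have hIVT2 : (0:ℝ) ∈ g '' Icc m M := by
    apply intermediate_value_Icc hmM.le (hcont.mono (fun y hy => le_trans hm0.le hy.1))
    constructor
    · exact hgm0.le
    · rw [hgM]; exact hμ0
  obtain ⟨γ₂, hγ₂mem, hγ₂⟩ := hIVT2
  have hγ₂m : m < γ₂ := by
    rcases lt_or_eq_of_le hγ₂mem.1 with h | h
    · exact h
    · exfalso; rw [← h] at hγ₂; linarith [hgm0, hγ₂]
  refine ⟨γ₁, γ₂, hγ₁mem.1, lt_trans hγ₁m hγ₂m, hγ₁, hγ₂, ?_, hγ₁m, hγ₂m, hγ₂mem.2⟩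
  intro γ hγ0 hgγ
  rcases le_or_gt γ m with h | h
  · left
    exact hanti.injOn ⟨hγ0, h⟩ ⟨hγ₁mem.1, hγ₁m.le⟩ (by rw [hγ₁]; exact hgγ)
  · right
    exact hmono.injOn (mem_Ici.mpr h.le) (mem_Ici.mpr hγ₂m.le) (by rw [hγ₂]; exact hgγ)
end

section
/- Let N ≥ 3, 0 < μ < μ̄ = ((N-2)/2)², and define u₀(x) = (4N(μ̄-μ)/(N-2))^((N-2)/4) · (|x|^((√μ̄ - √(μ̄-μ))/√μ̄) + |x|^((√μ̄ + √(μ̄-μ))/√μ̄))^(-(N-2)/2) for x ≠ 0. Then there exist constants C₁, C₂ > 0 depending only on N and μ such that |∇u₀(x)|·|x|^(√μ̄ - √(μ̄-μ) + 1) → C₁ as |x| → 0 and |∇u₀(x)|·|x|^(√μ̄ + √(μ̄-μ) + 1) → C₂ as |x| → ∞. -/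
open Filter Real

lemma rpow_key (p a b r : ℝ) (hr : 0 < r) :
    (r ^ a + r ^ b) ^ (-(p + 1)) * (a * r ^ (a - 1) + b * r ^ (b - 1)) * r ^ (p * a + 1)
      = (1 + r ^ (b - a)) ^ (-(p + 1)) * (a + b * r ^ (b - a)) := by
  have hra : (0:ℝ) < r ^ a := Real.rpow_pos_of_pos hr a
  have h1 : r ^ b = r ^ a * r ^ (b - a) := by
    rw [← Real.rpow_add hr]; ring_nf
  have h2 : r ^ (b - 1) = r ^ (a - 1) * r ^ (b - a) := by
    rw [← Real.rpow_add hr]; ring_nf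
  rw [h1, h2, show r ^ a + r ^ a * r ^ (b - a) = r ^ a * (1 + r ^ (b - a)) by ring,
    Real.mul_rpow hra.le (by positivity), ← Real.rpow_mul hr.le]
  have h5 : r ^ (a * -(p + 1)) * r ^ (a - 1) * r ^ (p * a + 1) = 1 := by
    rw [← Real.rpow_add hr, ← Real.rpow_add hr,
      show a * -(p + 1) + (a - 1) + (p * a + 1) = 0 by ring, Real.rpow_zero]
  linear_combination ((1 + r ^ (b - a)) ^ (-(p + 1)) * (a + b * r ^ (b - a))) * h5


lemma aux_grad {E : Type*} [NormedAddCommGroup E] [InnerProductSpace ℝ E] [CompleteSpace E]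
    (A p a b : ℝ) (hA : 0 < A) (hp : 0 < p) (ha : 0 < a) (hb : 0 < b)
    (u : E → ℝ) (hu : u = fun x => A * (‖x‖ ^ a + ‖x‖ ^ b) ^ (-p))
    (x : E) (hx : x ≠ 0) :
    ‖gradient u x‖
      = A * p * ((‖x‖ ^ a + ‖x‖ ^ b) ^ (-(p + 1)) * (a * ‖x‖ ^ (a - 1) + b * ‖x‖ ^ (b - 1))) := by
  have hr : (0:ℝ) < ‖x‖ := norm_pos_iff.mpr hx
  have hkey : ∀ (y : E) (e : ℝ), ((‖y‖ ^ 2 : ℝ)) ^ (e / 2) = ‖y‖ ^ e := by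
    intro y e
    rw [← Real.rpow_natCast ‖y‖ 2, ← Real.rpow_mul (norm_nonneg y)]
    congr 1
    push_cast
    ring
  have ht : (0:ℝ) < ‖x‖ ^ 2 := by positivity
  have hT : (0:ℝ) < (‖x‖ ^ 2 : ℝ) ^ (a / 2) + (‖x‖ ^ 2 : ℝ) ^ (b / 2) := by positivity
  have h1 : HasDerivAt (fun y : ℝ => y ^ (a / 2)) (a / 2 * (‖x‖ ^ 2 : ℝ) ^ (a / 2 - 1)) (‖x‖ ^ 2) :=
    Real.hasDerivAt_rpow_const (Or.inl ht.ne')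
  have h2 : HasDerivAt (fun y : ℝ => y ^ (b / 2)) (b / 2 * (‖x‖ ^ 2 : ℝ) ^ (b / 2 - 1)) (‖x‖ ^ 2) :=
    Real.hasDerivAt_rpow_const (Or.inl ht.ne')
  have hψ : HasDerivAt (fun y : ℝ => A * (y ^ (a / 2) + y ^ (b / 2)) ^ (-p))
      (A * ((a / 2 * (‖x‖ ^ 2 : ℝ) ^ (a / 2 - 1) + b / 2 * (‖x‖ ^ 2 : ℝ) ^ (b / 2 - 1)) * (-p) *
        ((‖x‖ ^ 2 : ℝ) ^ (a / 2) + (‖x‖ ^ 2 : ℝ) ^ (b / 2)) ^ (-p - 1))) (‖x‖ ^ 2) :=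
    ((h1.add h2).rpow_const (Or.inl hT.ne')).const_mul A
  have hcomp := hψ.comp_hasFDerivAt x (hasStrictFDerivAt_norm_sq x).hasFDerivAt
  set c := A * ((a / 2 * (‖x‖ ^ 2 : ℝ) ^ (a / 2 - 1) + b / 2 * (‖x‖ ^ 2 : ℝ) ^ (b / 2 - 1)) * (-p) *
        ((‖x‖ ^ 2 : ℝ) ^ (a / 2) + (‖x‖ ^ 2 : ℝ) ^ (b / 2)) ^ (-p - 1)) with hc
  have hu2 : u = (fun y : ℝ => A * (y ^ (a / 2) + y ^ (b / 2)) ^ (-p)) ∘ (fun x : E => ‖x‖ ^ 2) := by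
    funext y
    rw [hu]
    simp only [Function.comp_apply]
    rw [hkey y a, hkey y b]
  have hcomp' : HasFDerivAt u (c • (2 • innerSL ℝ x)) x := by
    rw [hu2]; exact hcomp
  have hgrad : HasGradientAt u ((2 * c) • x) x := by
    rw [hasGradientAt_iff_hasFDerivAt]
    have hL : (InnerProductSpace.toDual ℝ E) ((2 * c) • x) = c • (2 • innerSL ℝ x) := by
      ext v
      simp [real_inner_smul_left, two_smul]
      ring
    rw [hL]; exact hcomp'
  rw [hgrad.gradient, norm_smul, Real.norm_eq_abs]
  have e1 : ((‖x‖ ^ 2 : ℝ)) ^ (a / 2) = ‖x‖ ^ a := hkey x a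
  have e2 : ((‖x‖ ^ 2 : ℝ)) ^ (b / 2) = ‖x‖ ^ b := hkey x b
  have e3 : ((‖x‖ ^ 2 : ℝ)) ^ (a / 2 - 1) = ‖x‖ ^ (a - 2) := by
    rw [show a / 2 - 1 = (a - 2) / 2 by ring]; exact hkey x (a - 2)
  have e4 : ((‖x‖ ^ 2 : ℝ)) ^ (b / 2 - 1) = ‖x‖ ^ (b - 2) := by
    rw [show b / 2 - 1 = (b - 2) / 2 by ring]; exact hkey x (b - 2)
  have hc' : 2 * c = -(A * p * ((a * ‖x‖ ^ (a - 2) + b * ‖x‖ ^ (b - 2)) *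
      (‖x‖ ^ a + ‖x‖ ^ b) ^ (-(p + 1)))) := by
    rw [hc, e1, e2, e3, e4, show -p - 1 = -(p + 1) by ring]; ring
  rw [hc', abs_neg, abs_of_nonneg (by positivity)]
  have e5 : ‖x‖ ^ (a - 2) * ‖x‖ = ‖x‖ ^ (a - 1) := by
    rw [show a - 1 = a - 2 + 1 by ring, Real.rpow_add_one hr.ne']
  have e6 : ‖x‖ ^ (b - 2) * ‖x‖ = ‖x‖ ^ (b - 1) := by
    rw [show b - 1 = b - 2 + 1 by ring, Real.rpow_add_one hr.ne']
  linear_combination (A * p * (‖x‖ ^ a + ‖x‖ ^ b) ^ (-(p + 1)) * a) * e5 +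
    (A * p * (‖x‖ ^ a + ‖x‖ ^ b) ^ (-(p + 1)) * b) * e6


/-- For N ≥ 3, 0 < μ < μ̄ = ((N-2)/2)² and the explicit radial
solution u₀, there are constants C₁, C₂ > 0 (depending only on N, μ) with
|∇u₀(x)||x|^{√μ̄-√(μ̄-μ)+1} → C₁ as |x| → 0 and
|∇u₀(x)||x|^{√μ̄+√(μ̄-μ)+1} → C₂ as |x| → ∞. -/
theorem stmt7 (N : ℕ) (hN : 3 ≤ N) (μ μb : ℝ)
    (hμb : μb = (((N : ℝ) - 2) / 2) ^ 2) (hμ0 : 0 < μ) (hμ : μ < μb)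
    (u₀ : EuclideanSpace ℝ (Fin N) → ℝ)
    (hu : u₀ = fun x => (4 * (N : ℝ) * (μb - μ) / ((N : ℝ) - 2)) ^ (((N : ℝ) - 2) / 4) *
      (‖x‖ ^ ((Real.sqrt μb - Real.sqrt (μb - μ)) / Real.sqrt μb) +
        ‖x‖ ^ ((Real.sqrt μb + Real.sqrt (μb - μ)) / Real.sqrt μb)) ^
          (-(((N : ℝ) - 2) / 2))) :
    ∃ C₁ C₂ : ℝ, 0 < C₁ ∧ 0 < C₂ ∧
      Filter.Tendsto
        (fun x => ‖gradient u₀ x‖ * ‖x‖ ^ (Real.sqrt μb - Real.sqrt (μb - μ) + 1))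
        (nhdsWithin 0 {(0 : EuclideanSpace ℝ (Fin N))}ᶜ) (nhds C₁) ∧
      Filter.Tendsto
        (fun x => ‖gradient u₀ x‖ * ‖x‖ ^ (Real.sqrt μb + Real.sqrt (μb - μ) + 1))
        (Filter.comap (fun x : EuclideanSpace ℝ (Fin N) => ‖x‖) Filter.atTop)
        (nhds C₂) := by
  have hN3 : (3:ℝ) ≤ (N:ℝ) := by exact_mod_cast hN
  obtain ⟨p, hp_def⟩ : ∃ p : ℝ, p = ((N : ℝ) - 2) / 2 := ⟨_, rfl⟩
  rw [← hp_def] at hμb hu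
  have hp : 0 < p := by rw [hp_def]; linarith
  have hsqrtμb : Real.sqrt μb = p := by rw [hμb]; exact Real.sqrt_sq hp.le
  rw [hsqrtμb] at hu ⊢
  obtain ⟨s, hs_def⟩ : ∃ s : ℝ, s = Real.sqrt (μb - μ) := ⟨_, rfl⟩
  rw [← hs_def] at hu ⊢
  have hμm : 0 < μb - μ := by linarith
  have hs : 0 < s := by rw [hs_def]; exact Real.sqrt_pos.mpr hμm
  have hsp : s < p := by
    rw [hs_def, ← hsqrtμb]
    exact Real.sqrt_lt_sqrt hμm.le (by linarith)
  obtain ⟨a, ha_def⟩ : ∃ a : ℝ, a = (p - s) / p := ⟨_, rfl⟩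
  obtain ⟨b, hb_def⟩ : ∃ b : ℝ, b = (p + s) / p := ⟨_, rfl⟩
  rw [← ha_def, ← hb_def] at hu
  have ha : 0 < a := by rw [ha_def]; exact div_pos (by linarith) hp
  have hb : 0 < b := by rw [hb_def]; exact div_pos (by linarith) hp
  have hba : 0 < b - a := by
    have h : b - a = 2 * s / p := by rw [ha_def, hb_def, div_sub_div_same]; ring_nf
    rw [h]; positivity
  obtain ⟨A, hA_def⟩ :
      ∃ A : ℝ, A = (4 * (N : ℝ) * (μb - μ) / ((N : ℝ) - 2)) ^ (((N : ℝ) - 2) / 4) := ⟨_, rfl⟩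
  rw [← hA_def] at hu
  have hA : 0 < A := by
    rw [hA_def]
    exact Real.rpow_pos_of_pos (div_pos (mul_pos (by linarith) hμm) (by linarith)) _
  have hpa : p - s = p * a := by rw [ha_def]; field_simp
  have hpb : p + s = p * b := by rw [hb_def]; field_simp
  have hgrad : ∀ x : EuclideanSpace ℝ (Fin N), x ≠ 0 → ‖gradient u₀ x‖
      = A * p * ((‖x‖ ^ a + ‖x‖ ^ b) ^ (-(p + 1)) * (a * ‖x‖ ^ (a - 1) + b * ‖x‖ ^ (b - 1))) :=
    fun x hx => aux_grad A p a b hA hp ha hb u₀ hu x hx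
  refine ⟨A * p * a, A * p * b, by positivity, by positivity, ?_, ?_⟩
  · -- limit at 0
    have key1 : ∀ x : EuclideanSpace ℝ (Fin N), x ≠ 0 → ‖gradient u₀ x‖ * ‖x‖ ^ (p - s + 1)
        = A * p * ((1 + ‖x‖ ^ (b - a)) ^ (-(p + 1)) * (a + b * ‖x‖ ^ (b - a))) := by
      intro x hx
      have hr : 0 < ‖x‖ := norm_pos_iff.mpr hx
      rw [hgrad x hx, show p - s + 1 = p * a + 1 by rw [hpa]]
      linear_combination (A * p) * rpow_key p a b ‖x‖ hr
    have h1 : Tendsto (fun x : EuclideanSpace ℝ (Fin N) => ‖x‖)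
        (nhdsWithin 0 {(0 : EuclideanSpace ℝ (Fin N))}ᶜ) (nhds 0) := by
      have := (continuous_norm (E := EuclideanSpace ℝ (Fin N))).tendsto 0
      simpa using this.mono_left nhdsWithin_le_nhds
    have h2 : Tendsto (fun r : ℝ => r ^ (b - a)) (nhds 0) (nhds 0) := by
      have := (Real.continuousAt_rpow_const 0 (b - a) (Or.inr hba.le)).tendsto
      simpa [Real.zero_rpow hba.ne'] using this
    have hG : ContinuousAt (fun t : ℝ => A * p * ((1 + t) ^ (-(p + 1)) * (a + b * t))) 0 := by
      refine continuousAt_const.mul (ContinuousAt.mul ?_ (by fun_prop))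
      exact (continuousAt_const.add continuousAt_id).rpow_const (Or.inl (by norm_num))
    have htend := hG.tendsto.comp (h2.comp h1)
    have hval : A * p * ((1 + (0:ℝ)) ^ (-(p + 1)) * (a + b * 0)) = A * p * a := by
      norm_num [Real.one_rpow]
    rw [hval] at htend
    refine htend.congr' ?_
    filter_upwards [eventually_mem_nhdsWithin] with x hx
    exact (key1 x hx).symm
  · -- limit at infinity
    have key2 : ∀ x : EuclideanSpace ℝ (Fin N), x ≠ 0 → ‖gradient u₀ x‖ * ‖x‖ ^ (p + s + 1)
        = A * p * ((1 + ‖x‖ ^ (a - b)) ^ (-(p + 1)) * (b + a * ‖x‖ ^ (a - b))) := by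
      intro x hx
      have hr : 0 < ‖x‖ := norm_pos_iff.mpr hx
      rw [hgrad x hx, show p + s + 1 = p * b + 1 by rw [hpb],
        show ‖x‖ ^ a + ‖x‖ ^ b = ‖x‖ ^ b + ‖x‖ ^ a from add_comm _ _]
      linear_combination (A * p) * rpow_key p b a ‖x‖ hr
    have h1 : Tendsto (fun x : EuclideanSpace ℝ (Fin N) => ‖x‖)
        (Filter.comap (fun x : EuclideanSpace ℝ (Fin N) => ‖x‖) atTop) atTop :=
      tendsto_comap
    have h2 : Tendsto (fun r : ℝ => r ^ (a - b)) atTop (nhds 0) := by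
      have := tendsto_rpow_neg_atTop hba
      simpa [show -(b - a) = a - b by ring] using this
    have hG : ContinuousAt (fun t : ℝ => A * p * ((1 + t) ^ (-(p + 1)) * (b + a * t))) 0 := by
      refine continuousAt_const.mul (ContinuousAt.mul ?_ (by fun_prop))
      exact (continuousAt_const.add continuousAt_id).rpow_const (Or.inl (by norm_num))
    have htend := hG.tendsto.comp (h2.comp h1)
    have hval : A * p * ((1 + (0:ℝ)) ^ (-(p + 1)) * (b + a * 0)) = A * p * b := by
      norm_num [Real.one_rpow]
    rw [hval] at htend
    refine htend.congr' ?_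
    have hev : ∀ᶠ x : EuclideanSpace ℝ (Fin N) in
        Filter.comap (fun x : EuclideanSpace ℝ (Fin N) => ‖x‖) atTop, x ≠ 0 := by
      filter_upwards [h1.eventually (eventually_ge_atTop 1)] with x hx
      intro h0
      rw [h0] at hx
      simp at hx
      linarith
    filter_upwards [hev] with x hx
    exact (key2 x hx).symm
end

section
/- Let β ∈ (0,1), A > 0, c > 1, and let M_i be a sequence of nonnegative reals with M_i ≤ c^i · A · M_{i+1}^(1-β) for all i ≥ 0, and suppose M_i is bounded. Then M₀ ≤ C · A^(1/β) for a constant C depending only on c and β. -/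
open Filter Real

/-- If 0 < β < 1, c > 1, A > 0 and a bounded nonnegative sequence
satisfies M_i ≤ c^i A M_{i+1}^{1-β}, then M₀ ≤ C A^{1/β} with C depending only
on c and β. -/
theorem stmt13 (β c : ℝ) (hβ0 : 0 < β) (hβ1 : β < 1) (hc : 1 < c) :
    ∃ C : ℝ, 0 < C ∧ ∀ (A : ℝ) (M : ℕ → ℝ), 0 < A →
      (∀ i, 0 ≤ M i) →
      (∀ i : ℕ, M i ≤ c ^ (i : ℝ) * A * M (i + 1) ^ (1 - β)) →
      BddAbove (Set.range M) →
      M 0 ≤ C * A ^ (1 / β) := by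
  have hc0 : (0:ℝ) < c := lt_trans one_pos hc
  refine ⟨c ^ ((1 - β)/β^2 : ℝ), Real.rpow_pos_of_pos hc0 _, ?_⟩
  intro A M hA hM0 hrec hbdd
  set D : ℕ → ℝ := fun i => c ^ ((1 - β)/β^2 + (i:ℝ)/β) * A ^ (1/β : ℝ) with hD
  have hDpos : ∀ i, 0 < D i := fun i =>
    mul_pos (Real.rpow_pos_of_pos hc0 _) (Real.rpow_pos_of_pos hA _)
  have hβ0' : (0:ℝ) < 1 - β := by linarith
  -- key identity
  have hkey : ∀ i : ℕ, c ^ (i:ℝ) * A * (D (i+1)) ^ (1 - β) = D i := by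
    intro i
    simp only [hD]
    rw [Real.mul_rpow (Real.rpow_pos_of_pos hc0 _).le (Real.rpow_pos_of_pos hA _).le,
      ← Real.rpow_mul hc0.le, ← Real.rpow_mul hA.le, mul_mul_mul_comm,
      ← Real.rpow_add hc0]
    have hA1 : A * A ^ ((1/β)*(1-β):ℝ) = A ^ (1/β : ℝ) := by
      nth_rewrite 1 [← Real.rpow_one A]
      rw [← Real.rpow_add hA]
      congr 1
      field_simp
      ring
    rw [hA1]
    congr 1
    push_cast
    field_simp
    ring_nf
  set N : ℕ → ℝ := fun i => M i / D i with hNdef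
  have hNnn : ∀ i, 0 ≤ N i := fun i => div_nonneg (hM0 i) (hDpos i).le
  have hN : ∀ i, N i ≤ N (i+1) ^ (1 - β) := by
    intro i
    have h1 : N i ≤ c ^ (i:ℝ) * A * M (i+1) ^ (1-β) / D i := by
      simp only [hNdef]
      gcongr
      exact hrec i
    refine h1.trans_eq ?_
    rw [Real.div_rpow (hM0 _) (hDpos _).le, ← hkey i, mul_assoc, mul_assoc,
      mul_div_mul_left _ _ (ne_of_gt (Real.rpow_pos_of_pos hc0 _)),
      mul_div_mul_left _ _ (ne_of_gt hA)]
  have hiter : ∀ n, N 0 ≤ (N n) ^ ((1-β)^n : ℝ) := by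
    intro n
    induction n with
    | zero => simp
    | succ n ih =>
      refine ih.trans ?_
      calc N n ^ ((1-β)^n : ℝ)
          ≤ (N (n+1) ^ (1-β)) ^ ((1-β)^n : ℝ) :=
            Real.rpow_le_rpow (hNnn n) (hN n) (pow_nonneg hβ0'.le n)
        _ = N (n+1) ^ ((1-β)^(n+1) : ℝ) := by
            rw [← Real.rpow_natCast (1-β) n]  -- maybe unneeded
            rw [← Real.rpow_mul (hNnn (n+1)), Real.rpow_natCast]
            ring_nf
  -- boundedness of N
  obtain ⟨B, hB⟩ := hbdd
  have hBbd : ∀ i, M i ≤ B := fun i => hB (Set.mem_range_self i)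
  set B' : ℝ := max 1 (B / D 0) with hB'
  have hB'1 : (1:ℝ) ≤ B' := le_max_left _ _
  have hNB : ∀ n, N n ≤ B' := by
    intro n
    have hDmono : D 0 ≤ D n := by
      apply mul_le_mul_of_nonneg_right _ (Real.rpow_pos_of_pos hA _).le
      apply Real.rpow_le_rpow_left_iff hc |>.mpr
      have : (0:ℝ) ≤ (n:ℝ)/β := div_nonneg (Nat.cast_nonneg n) hβ0.le
      simp only [Nat.cast_zero, zero_div]
      linarith
    have hBnn : 0 ≤ B := le_trans (hM0 0) (hBbd 0)
    have : N n ≤ B / D 0 := by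
      simp only [hNdef]
      calc M n / D n ≤ B / D n := by gcongr; exact hBbd n
        _ ≤ B / D 0 := by gcongr
        
    exact this.trans (le_max_right _ _)
  -- limit
  have hr : Tendsto (fun n : ℕ => ((1-β)^n : ℝ)) atTop (nhds 0) :=
    tendsto_pow_atTop_nhds_zero_of_lt_one hβ0'.le (by linarith)
  have htend : Tendsto (fun n : ℕ => B' ^ ((1-β)^n : ℝ)) atTop (nhds 1) := by
    have := (tendsto_const_nhds : Tendsto (fun _ : ℕ => B') atTop (nhds B')).rpow hr
      (Or.inl (by positivity))
    simpa using this
  have hN01 : N 0 ≤ 1 := by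
    refine ge_of_tendsto' htend ?_
    intro n
    exact (hiter n).trans (Real.rpow_le_rpow (hNnn n) (hNB n) (pow_nonneg hβ0'.le n))
  have : M 0 ≤ D 0 := by
    have := (div_le_one (hDpos 0)).mp hN01
    exact this
  refine this.trans_eq ?_
  simp [hD]
end
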